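/- (Acyclic, single-type attacked area, no islanding ⇒ perfect detection witnesses exist) Suppose the attacked area H is acyclic, all buses in H are load buses (p_v ≤ 0 for all v ∈ V_H), the grid remains connected after the attack so Δ* = 0 (hence g_{D,u} = 0 for all u), and every link e = (s,t) ∈ E_H has θ'_s ≠ θ'_t. Then: (a) for every failed link l ∈ F, there exists a hyper-node U constructed by BFS from an endpoint u of l with D̃_{u,l} < 0 such that conditions (1)–(3) of the no-miss hyper-node theorem hold (with f_{U,g} = 0); and (b) for every operational link e ∈ E_H \ F, there exists a hyper-node U satisfying conditions (1)–(3) of the no-false-alarm hyper-node theorem (with f_{U,g} = 0). Consequently, the LP-based algorithm returns exactly F. -/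

import Mathlib

open Matrix Finset

/-- Boundary edge set `E_U` of a hyper-node `U`. -/
def EUb {V E : Type*} [Fintype E] [DecidableEq V] (ends : E → V × V) (U : Finset V) :
    Finset E :=
  Finset.univ.filter (fun e =>
    ((ends e).1 ∈ U ∧ (ends e).2 ∉ U) ∨ ((ends e).2 ∈ U ∧ (ends e).1 ∉ U))

/-- `D̃_{U,e} = ∑_{u ∈ U} D̃_{u,e}`. -/
noncomputable def dtU {V E : Type*} (Dt : Matrix V E ℝ) (U : Finset V) (e : E) : ℝ :=
  ∑ u ∈ U, Dt u e


lemma key15 {V E : Type*} [Fintype V] [DecidableEq V] [Fintype E] [DecidableEq E]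
    (ends : E → V × V) (hends : ∀ e, (ends e).1 ≠ (ends e).2)
    (hinj : ∀ e₁ e₂, (ends e₁ = ends e₂ ∨ ends e₁ = ((ends e₂).2, (ends e₂).1)) → e₁ = e₂)
    (hacyc : (SimpleGraph.fromRel (fun u v => ∃ e, ends e = (u, v))).IsAcyclic)
    (r : E → ℝ) (θ' : V → ℝ)
    (Dt : Matrix V E ℝ)
    (hDt : ∀ u e, Dt u e =
      if u = (ends e).1 then (θ' u - θ' (ends e).2) / r e
      else if u = (ends e).2 then (θ' u - θ' (ends e).1) / r e else 0)
    (l : E) (u v : V) (huv : ends l = (u, v) ∨ ends l = (v, u)) :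
    ∃ U : Finset V, EUb ends U = {l} ∧ dtU Dt U l = (θ' u - θ' v) / r l := by
  classical
  set G := SimpleGraph.fromRel (fun a b => ∃ e, ends e = (a, b)) with hG
  set G' := SimpleGraph.fromRel (fun a b => ∃ e, e ≠ l ∧ ends e = (a, b)) with hG'
  set s := (ends l).1 with hs
  set t := (ends l).2 with ht
  have hst : ends l = (s, t) := rfl
  have hne : s ≠ t := hends l
  have huv' : (s = u ∧ t = v) ∨ (s = v ∧ t = u) := by
    rcases huv with h | h
    · exact Or.inl ⟨congrArg Prod.fst h, congrArg Prod.snd h⟩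
    · exact Or.inr ⟨congrArg Prod.fst h, congrArg Prod.snd h⟩
  have huvne : u ≠ v := by
    rcases huv' with ⟨h1, h2⟩ | ⟨h1, h2⟩
    · rw [← h1, ← h2]; exact hne
    · rw [← h1, ← h2]; exact hne.symm
  have hadj : G.Adj s t := by
    rw [hG, SimpleGraph.fromRel_adj]
    exact ⟨hne, Or.inl ⟨l, hst⟩⟩
  have hbr : G.IsBridge s(s, t) :=
    (SimpleGraph.isAcyclic_iff_forall_edge_isBridge.mp hacyc)
      (G.mem_edgeSet.mpr hadj)
  have hnr : ¬ (G \ SimpleGraph.fromEdgeSet {s(s, t)}).Reachable s t :=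
    SimpleGraph.isBridge_iff.mp hbr
  have hmono : G' ≤ G \ SimpleGraph.fromEdgeSet {s(s, t)} := by
    intro a b hab
    rw [hG', SimpleGraph.fromRel_adj] at hab
    obtain ⟨hab1, hab2⟩ := hab
    rw [SimpleGraph.sdiff_adj, SimpleGraph.fromEdgeSet_adj]
    constructor
    · rw [hG, SimpleGraph.fromRel_adj]
      refine ⟨hab1, ?_⟩
      rcases hab2 with ⟨e, _, he⟩ | ⟨e, _, he⟩
      · exact Or.inl ⟨e, he⟩
      · exact Or.inr ⟨e, he⟩
    · rintro ⟨hmem, -⟩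
      simp only [Set.mem_singleton_iff, Sym2.eq_iff] at hmem
      rcases hab2 with ⟨e, hel, he⟩ | ⟨e, hel, he⟩
      · apply hel; apply hinj e l
        rcases hmem with ⟨h1, h2⟩ | ⟨h1, h2⟩
        · exact Or.inl (by rw [he, hst, h1, h2])
        · exact Or.inr (by rw [he, h1, h2])
      · apply hel; apply hinj e l
        rcases hmem with ⟨h1, h2⟩ | ⟨h1, h2⟩
        · exact Or.inr (by rw [he, h1, h2])
        · exact Or.inl (by rw [he, hst, h1, h2])
  -- the component of u in G'
  refine ⟨Finset.univ.filter (fun w => G'.Reachable u w), ?_, ?_⟩ <;>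
    set U : Finset V := Finset.univ.filter (fun w => G'.Reachable u w) with hU
  all_goals {
    have huU : u ∈ U := by
      simp only [hU, Finset.mem_filter, Finset.mem_univ, true_and]
      exact SimpleGraph.Reachable.refl u
    have hvU : v ∉ U := by
      simp only [hU, Finset.mem_filter, Finset.mem_univ, true_and]
      intro h
      rcases huv' with ⟨h1, h2⟩ | ⟨h1, h2⟩
      · subst h1; subst h2; exact hnr (h.mono hmono)
      · subst h1; subst h2; exact hnr ((h.mono hmono).symm)
    have hclosed : ∀ e, e ≠ l → ((ends e).1 ∈ U ↔ (ends e).2 ∈ U) := by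
      intro e hel
      have hadj' : G'.Adj (ends e).1 (ends e).2 := by
        rw [hG', SimpleGraph.fromRel_adj]
        exact ⟨hends e, Or.inl ⟨e, hel, rfl⟩⟩
      simp only [hU, Finset.mem_filter, Finset.mem_univ, true_and]
      exact ⟨fun h => h.trans hadj'.reachable, fun h => h.trans hadj'.symm.reachable⟩
    have hEU : EUb ends U = {l} := by
      ext e'
      simp only [EUb, Finset.mem_filter, Finset.mem_univ, true_and, Finset.mem_singleton]
      constructor
      · rintro (⟨h1, h2⟩ | ⟨h1, h2⟩) <;> by_contra hel <;>
          [exact h2 ((hclosed e' hel).mp h1); exact h2 ((hclosed e' hel).mpr h1)]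
      · rintro rfl
        rcases huv' with ⟨h1, h2⟩ | ⟨h1, h2⟩
        · exact Or.inl ⟨by rw [← hs, h1]; exact huU, by rw [← ht, h2]; exact hvU⟩
        · exact Or.inr ⟨by rw [← ht, h2]; exact huU, by rw [← hs, h1]; exact hvU⟩
    have hdt : dtU Dt U l = (θ' u - θ' v) / r l := by
      rw [dtU, Finset.sum_eq_single_of_mem u huU]
      · rw [hDt]
        rcases huv' with ⟨h1, h2⟩ | ⟨h1, h2⟩
        · rw [if_pos (show u = (ends l).1 from by rw [← hs]; exact h1.symm),
            show (ends l).2 = v from by rw [← ht]; exact h2]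
        · rw [if_neg (show ¬ u = (ends l).1 from by rw [← hs, h1]; exact huvne),
            if_pos (show u = (ends l).2 from by rw [← ht]; exact h2.symm),
            show (ends l).1 = v from by rw [← hs]; exact h1]
      · intro w hw hwu
        rw [hDt]
        have hws : w ≠ s := by
          rcases huv' with ⟨h1, h2⟩ | ⟨h1, h2⟩
          · rw [h1]; exact hwu
          · rw [h1]; intro h; exact hvU (h ▸ hw)
        have hwt : w ≠ t := by
          rcases huv' with ⟨h1, h2⟩ | ⟨h1, h2⟩
          · rw [h2]; intro h; exact hvU (h ▸ hw)
          · rw [h2]; exact hwu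
        rw [if_neg hws, if_neg hwt]
    first
    | exact hEU
    | exact hdt
  }

/-- If the attacked area `H` is acyclic, has no parallel edges, all its buses are load
buses, the grid stays connected after attack (`Δ* = 0`), and every link carries a
nonzero (hypothetical) flow, then for every failed link there is a hyper-node
satisfying the no-miss conditions (with `f_{U,g} = 0`), and for every operational link
there is a hyper-node satisfying the no-false-alarm conditions; hence the LP-based
algorithm returns exactly `F`. -/
theorem stmt15 {V E : Type*} [Fintype V] [DecidableEq V] [Fintype E] [DecidableEq E]
    (ends : E → V × V) (hends : ∀ e, (ends e).1 ≠ (ends e).2)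
    (hinj : ∀ e₁ e₂, (ends e₁ = ends e₂ ∨ ends e₁ = ((ends e₂).2, (ends e₂).1)) → e₁ = e₂)
    (hacyc : (SimpleGraph.fromRel (fun u v => ∃ e, ends e = (u, v))).IsAcyclic)
    (r : E → ℝ) (hr : ∀ e, 0 < r e) (θ' : V → ℝ)
    (hnd : ∀ e, θ' (ends e).1 ≠ θ' (ends e).2)
    (Dt : Matrix V E ℝ)
    (hDt : ∀ u e, Dt u e =
      if u = (ends e).1 then (θ' u - θ' (ends e).2) / r e
      else if u = (ends e).2 then (θ' u - θ' (ends e).1) / r e else 0)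
    (p Δstar : V → ℝ) (hload : ∀ v, p v ≤ 0) (hΔ : ∀ v, Δstar v = 0)
    (gD gDm : V → ℝ) (hgD : ∀ u, gD u = -Δstar u)
    (hgDm : ∀ u, gDm u = -(p u - Δstar u))
    (F : Finset E) (η : ℝ) (hη : 0 < η ∧ η < 1) :
    (∀ l ∈ F, ∃ U : Finset V, l ∈ EUb ends U ∧
      (∀ e ∈ EUb ends U ∩ F, ∀ l' ∈ EUb ends U ∩ F,
        dtU Dt U e * dtU Dt U l' > 0) ∧
      (∀ e ∈ EUb ends U, e ∉ F → ∀ l' ∈ EUb ends U ∩ F,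
        ¬ (dtU Dt U l' * dtU Dt U e > 0)) ∧
      ((if dtU Dt U l < 0 then ∑ u ∈ U, gD u else ∑ u ∈ U, gDm u)
        + (η - 1) * |dtU Dt U l| < 0)) ∧
    (∀ e, e ∉ F → ∃ U : Finset V, e ∈ EUb ends U ∧
      (∀ l₁ ∈ EUb ends U, l₁ ∉ F → ∀ l₂ ∈ EUb ends U, l₂ ∉ F →
        dtU Dt U l₁ * dtU Dt U l₂ > 0) ∧
      ((EUb ends U ∩ F).Nonempty →
        ∀ e' ∈ EUb ends U, e' ∉ F → ∀ l' ∈ EUb ends U ∩ F,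
          ¬ (dtU Dt U l' * dtU Dt U e' > 0)) ∧
      ((if dtU Dt U e > 0 then ∑ u ∈ U, gD u else ∑ u ∈ U, gDm u)
        - η * |dtU Dt U e| < 0)) := by
  classical
  have hsum0 : ∀ U : Finset V, ∑ u ∈ U, gD u = 0 := by
    intro U; simp [hgD, hΔ]
  constructor
  · intro l hl
    obtain ⟨U, hEU, hneg⟩ : ∃ U : Finset V, EUb ends U = {l} ∧ dtU Dt U l < 0 := by
      rcases lt_or_gt_of_ne (hnd l) with h | h
      · obtain ⟨U, h1, h2⟩ := key15 ends hends hinj hacyc r θ' Dt hDt l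
          (ends l).1 (ends l).2 (Or.inl rfl)
        exact ⟨U, h1, h2 ▸ div_neg_of_neg_of_pos (sub_neg.mpr h) (hr l)⟩
      · obtain ⟨U, h1, h2⟩ := key15 ends hends hinj hacyc r θ' Dt hDt l
          (ends l).2 (ends l).1 (Or.inr rfl)
        exact ⟨U, h1, h2 ▸ div_neg_of_neg_of_pos (sub_neg.mpr h) (hr l)⟩
    refine ⟨U, by rw [hEU]; exact Finset.mem_singleton_self l, ?_, ?_, ?_⟩
    · intro e he l' hl'
      rw [hEU, Finset.mem_inter, Finset.mem_singleton] at he hl'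
      rw [he.1, hl'.1]
      exact mul_pos_of_neg_of_neg hneg hneg
    · intro e he heF l' hl'
      rw [hEU, Finset.mem_singleton] at he
      exact absurd (he ▸ hl) heF
    · rw [if_pos hneg, hsum0, zero_add]
      have habs : 0 < |dtU Dt U l| := abs_pos.mpr hneg.ne
      have : η - 1 < 0 := by linarith [hη.2]
      exact mul_neg_of_neg_of_pos this habs
  · intro e he
    obtain ⟨U, hEU, hpos⟩ : ∃ U : Finset V, EUb ends U = {e} ∧ 0 < dtU Dt U e := by
      rcases lt_or_gt_of_ne (hnd e) with h | h
      · obtain ⟨U, h1, h2⟩ := key15 ends hends hinj hacyc r θ' Dt hDt e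
          (ends e).2 (ends e).1 (Or.inr rfl)
        exact ⟨U, h1, h2 ▸ div_pos (sub_pos.mpr h) (hr e)⟩
      · obtain ⟨U, h1, h2⟩ := key15 ends hends hinj hacyc r θ' Dt hDt e
          (ends e).1 (ends e).2 (Or.inl rfl)
        exact ⟨U, h1, h2 ▸ div_pos (sub_pos.mpr h) (hr e)⟩
    refine ⟨U, by rw [hEU]; exact Finset.mem_singleton_self e, ?_, ?_, ?_⟩
    · intro l1 h1 _ l2 h2 _
      rw [hEU, Finset.mem_singleton] at h1 h2
      rw [h1, h2]
      exact mul_pos hpos hpos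
    · intro _ e' he' he'F l' hl'
      rw [hEU, Finset.mem_inter, Finset.mem_singleton] at hl'
      exact absurd (hl'.1 ▸ hl'.2) he
    · rw [if_pos hpos, hsum0, zero_sub, neg_lt, neg_zero]
      exact mul_pos hη.1 (abs_pos.mpr hpos.ne')
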